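/- Conformal factor of the contact Hamiltonian flow: Let n ≥ 1 and let H : ℝⁿ × ℝⁿ × ℝ → ℝ be twice continuously differentiable. Define the contact Hamiltonian vector field X on ℝⁿ × ℝⁿ × ℝ by X(x,p,z) := (∇_p H(x,p,z), −∇_x H(x,p,z) − (∂_z H(x,p,z)) p, ⟨p, ∇_p H(x,p,z)⟩ − H(x,p,z)). Let φ : ℝ × (ℝⁿ × ℝⁿ × ℝ) → ℝⁿ × ℝⁿ × ℝ be twice continuously differentiable with φ(0,w) = w and ∂_t φ(t,w) = X(φ(t,w)) for all (t,w). Write φ(t,w) = (x_t(w), p_t(w), z_t(w)). Then for every t ∈ ℝ, every w = (x,p,z), and every direction v = (v_x, v_p, v_z), one has D z_t(w)[v] − ⟨p_t(w), D x_t(w)[v]⟩ = exp(−∫₀ᵗ ∂_z H(φ(s,w)) ds) · (v_z − ⟨p, v_x⟩); i.e. the pullback of the contact form θ = dz − ⟨p, dx⟩ under the time-t flow equals the conformal factor exp(−∫₀ᵗ ∂_z H ∘ φ_s ds) times θ. -/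

import Mathlib

open scoped RealInnerProductSpace
noncomputable section

/-- The contact Hamiltonian vector field
`X(x,p,z) = (∇ₚH, −∇ₓH − (∂_z H) p, ⟨p, ∇ₚH⟩ − H)`. -/
def contactField {n : ℕ}
    (H : EuclideanSpace ℝ (Fin n) × EuclideanSpace ℝ (Fin n) × ℝ → ℝ)
    (w : EuclideanSpace ℝ (Fin n) × EuclideanSpace ℝ (Fin n) × ℝ) :
    EuclideanSpace ℝ (Fin n) × EuclideanSpace ℝ (Fin n) × ℝ :=
  (gradient (fun q => H (w.1, q, w.2.2)) w.2.1,
   -gradient (fun y => H (y, w.2.1, w.2.2)) w.1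
     - (deriv (fun ζ => H (w.1, w.2.1, ζ)) w.2.2) • w.2.1,
   ⟪w.2.1, gradient (fun q => H (w.1, q, w.2.2)) w.2.1⟫ - H w)

section ContactAux

abbrev EuSp (n : ℕ) := EuclideanSpace ℝ (Fin n)
abbrev WSp (n : ℕ) := EuSp n × EuSp n × ℝ

/-- Inclusion `x ↦ (x,0,0)` as a continuous linear map. -/
def iotaX (n : ℕ) : EuSp n →L[ℝ] WSp n :=
  (ContinuousLinearMap.id ℝ (EuSp n)).prod 0

/-- Inclusion `p ↦ (0,p,0)` as a continuous linear map. -/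
def iotaP (n : ℕ) : EuSp n →L[ℝ] WSp n :=
  (0 : EuSp n →L[ℝ] EuSp n).prod ((ContinuousLinearMap.id ℝ (EuSp n)).prod 0)

variable {n : ℕ} {H : WSp n → ℝ}

theorem fderiv_partialP (hH : Differentiable ℝ H) (y : WSp n) :
    fderiv ℝ (fun q => H (y.1, q, y.2.2)) y.2.1 = (fderiv ℝ H y).comp (iotaP n) := by
  have h1 : HasFDerivAt (fun q : EuSp n => ((y.1, q, y.2.2) : WSp n)) (iotaP n) y.2.1 :=
    (hasFDerivAt_const _ _).prodMk ((hasFDerivAt_id _).prodMk (hasFDerivAt_const _ _))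
  exact ((hH y).hasFDerivAt.comp y.2.1 h1).fderiv

theorem fderiv_partialX (hH : Differentiable ℝ H) (y : WSp n) :
    fderiv ℝ (fun q => H (q, y.2.1, y.2.2)) y.1 = (fderiv ℝ H y).comp (iotaX n) := by
  have h1 : HasFDerivAt (fun q : EuSp n => ((q, y.2.1, y.2.2) : WSp n)) (iotaX n) y.1 :=
    (hasFDerivAt_id _).prodMk ((hasFDerivAt_const _ _).prodMk (hasFDerivAt_const _ _))
  exact ((hH y).hasFDerivAt.comp y.1 h1).fderiv

theorem inner_gradP (hH : Differentiable ℝ H) (y : WSp n) (u : EuSp n) :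
    ⟪gradient (fun q => H (y.1, q, y.2.2)) y.2.1, u⟫ = fderiv ℝ H y (0, u, 0) := by
  unfold gradient
  rw [fderiv_partialP hH y, InnerProductSpace.toDual_symm_apply]
  rfl

theorem inner_gradX (hH : Differentiable ℝ H) (y : WSp n) (u : EuSp n) :
    ⟪gradient (fun q => H (q, y.2.1, y.2.2)) y.1, u⟫ = fderiv ℝ H y (u, 0, 0) := by
  unfold gradient
  rw [fderiv_partialX hH y, InnerProductSpace.toDual_symm_apply]
  rfl

theorem deriv_partialZ (hH : Differentiable ℝ H) (y : WSp n) :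
    deriv (fun ζ => H (y.1, y.2.1, ζ)) y.2.2 = fderiv ℝ H y (0, 0, 1) := by
  have h1 : HasDerivAt (fun ζ : ℝ => ((y.1, y.2.1, ζ) : WSp n))
      ((0 : EuSp n), (0 : EuSp n), (1 : ℝ)) y.2.2 :=
    (hasDerivAt_const _ _).prodMk ((hasDerivAt_const _ _).prodMk (hasDerivAt_id _))
  exact ((hH y).hasFDerivAt.comp_hasDerivAt y.2.2 h1).deriv

theorem fderiv_H_apply (hH : Differentiable ℝ H) (y u : WSp n) :
    fderiv ℝ H y u =
      ⟪gradient (fun q => H (q, y.2.1, y.2.2)) y.1, u.1⟫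
      + ⟪gradient (fun q => H (y.1, q, y.2.2)) y.2.1, u.2.1⟫
      + deriv (fun ζ => H (y.1, y.2.1, ζ)) y.2.2 * u.2.2 := by
  rw [inner_gradX hH y, inner_gradP hH y, deriv_partialZ hH y]
  have hu : (u : WSp n) = (u.1, 0, 0) + (0, u.2.1, 0)
      + u.2.2 • ((0 : EuSp n), (0 : EuSp n), (1 : ℝ)) := by
    simp [Prod.ext_iff]
  calc fderiv ℝ H y u
      = fderiv ℝ H y ((u.1, 0, 0) + (0, u.2.1, 0)
          + u.2.2 • ((0 : EuSp n), (0 : EuSp n), (1 : ℝ))) := by rw [← hu]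
    _ = _ := by rw [map_add, map_add, map_smul, smul_eq_mul]; ring

theorem contDiff_gradP (hH : ContDiff ℝ 2 H) :
    ContDiff ℝ 1 (fun y : WSp n => gradient (fun q => H (y.1, q, y.2.2)) y.2.1) := by
  have heq : (fun y : WSp n => gradient (fun q => H (y.1, q, y.2.2)) y.2.1)
      = fun y => (InnerProductSpace.toDual ℝ (EuSp n)).symm ((fderiv ℝ H y).comp (iotaP n)) := by
    funext y
    unfold gradient
    rw [fderiv_partialP (hH.differentiable two_ne_zero) y]
  rw [heq]
  exact (InnerProductSpace.toDual ℝ (EuSp n)).symm.contDiff.comp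
    ((hH.fderiv_right (by norm_num)).clm_comp contDiff_const)

theorem contDiff_gradX (hH : ContDiff ℝ 2 H) :
    ContDiff ℝ 1 (fun y : WSp n => gradient (fun q => H (q, y.2.1, y.2.2)) y.1) := by
  have heq : (fun y : WSp n => gradient (fun q => H (q, y.2.1, y.2.2)) y.1)
      = fun y => (InnerProductSpace.toDual ℝ (EuSp n)).symm ((fderiv ℝ H y).comp (iotaX n)) := by
    funext y
    unfold gradient
    rw [fderiv_partialX (hH.differentiable two_ne_zero) y]
  rw [heq]
  exact (InnerProductSpace.toDual ℝ (EuSp n)).symm.contDiff.comp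
    ((hH.fderiv_right (by norm_num)).clm_comp contDiff_const)

theorem contDiff_pz (hH : ContDiff ℝ 2 H) :
    ContDiff ℝ 1 (fun y : WSp n => deriv (fun ζ => H (y.1, y.2.1, ζ)) y.2.2) := by
  have heq : (fun y : WSp n => deriv (fun ζ => H (y.1, y.2.1, ζ)) y.2.2)
      = fun y : WSp n => fderiv ℝ H y ((0, 0, 1) : WSp n) :=
    funext fun y => deriv_partialZ (hH.differentiable two_ne_zero) y
  rw [heq]
  exact (hH.fderiv_right (by norm_num)).clm_apply contDiff_const

end ContactAux

set_option maxHeartbeats 1600000 in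
/-- Conformal factor of the contact Hamiltonian flow: the pullback of the contact form
`θ = dz − ⟨p, dx⟩` under the time-`t` flow equals `exp(−∫₀ᵗ ∂_z H ∘ φ_s ds) · θ`. -/
theorem contact_flow_conformal_factor {n : ℕ} (hn : 1 ≤ n)
    (H : EuclideanSpace ℝ (Fin n) × EuclideanSpace ℝ (Fin n) × ℝ → ℝ)
    (hH : ContDiff ℝ 2 H)
    (φ : ℝ × (EuclideanSpace ℝ (Fin n) × EuclideanSpace ℝ (Fin n) × ℝ) →
      EuclideanSpace ℝ (Fin n) × EuclideanSpace ℝ (Fin n) × ℝ)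
    (hφ : ContDiff ℝ 2 φ)
    (hφ0 : ∀ w, φ (0, w) = w)
    (hφflow : ∀ t w, HasDerivAt (fun s => φ (s, w)) (contactField H (φ (t, w))) t) :
    ∀ (t : ℝ) (w v : EuclideanSpace ℝ (Fin n) × EuclideanSpace ℝ (Fin n) × ℝ),
      fderiv ℝ (fun w' => (φ (t, w')).2.2) w v
          - ⟪(φ (t, w)).2.1, fderiv ℝ (fun w' => (φ (t, w')).1) w v⟫
        = Real.exp (-(∫ s in (0 : ℝ)..t,
              deriv (fun ζ => H ((φ (s, w)).1, (φ (s, w)).2.1, ζ)) (φ (s, w)).2.2))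
            * (v.2.2 - ⟪w.2.1, v.1⟫) := by
  intro t w v
  have hφd : Differentiable ℝ φ := hφ.differentiable two_ne_zero
  have hHd : Differentiable ℝ H := hH.differentiable two_ne_zero
  have hΨ : ContDiff ℝ 1 (fderiv ℝ φ) := hφ.fderiv_right (by norm_num)
  have hΨd : Differentiable ℝ (fderiv ℝ φ) := hΨ.differentiable one_ne_zero
  set ι : WSp n →L[ℝ] ℝ × WSp n :=
    (0 : WSp n →L[ℝ] ℝ).prod (ContinuousLinearMap.id ℝ (WSp n)) with hι
  have hjd : ∀ (r : ℝ) (w' : WSp n),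
      HasFDerivAt (fun u : WSp n => ((r, u) : ℝ × WSp n)) ι w' :=
    fun r w' => (hasFDerivAt_const r w').prodMk (hasFDerivAt_id w')
  -- Claim A: the derivative in time of the spatial differential
  have hαderiv : ∀ s : ℝ, HasDerivAt (fun r => fderiv ℝ φ (r, w) ((0 : ℝ), v))
      (fderiv ℝ (fun w' => contactField H (φ (s, w'))) w v) s := by
    intro s
    have hΨ10 : ∀ (r : ℝ) (w' : WSp n),
        fderiv ℝ φ (r, w') ((1 : ℝ), (0 : WSp n)) = contactField H (φ (r, w')) := by
      intro r w'
      have hc : HasDerivAt (fun u : ℝ => ((u, w') : ℝ × WSp n)) (1, 0) r :=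
        (hasDerivAt_id r).prodMk (hasDerivAt_const r w')
      have h1 : HasDerivAt (fun u => φ (u, w'))
          (fderiv ℝ φ (r, w') ((1 : ℝ), (0 : WSp n))) r :=
        (hφd (r, w')).hasFDerivAt.comp_hasDerivAt r hc
      exact h1.unique (hφflow r w')
    have hcurve : HasDerivAt (fun r : ℝ => ((r, w) : ℝ × WSp n)) (1, 0) s :=
      (hasDerivAt_id s).prodMk (hasDerivAt_const s w)
    have h1 : HasDerivAt (fun r => fderiv ℝ φ (r, w))
        (fderiv ℝ (fderiv ℝ φ) (s, w) (1, 0)) s :=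
      (hΨd (s, w)).hasFDerivAt.comp_hasDerivAt s hcurve
    have h2 : HasDerivAt (fun r => fderiv ℝ φ (r, w) ((0 : ℝ), v))
        (fderiv ℝ (fderiv ℝ φ) (s, w) (1, 0) ((0 : ℝ), v)) s :=
      (ContinuousLinearMap.apply ℝ (WSp n) ((0 : ℝ), v)).hasFDerivAt.comp_hasDerivAt s h1
    have hsymm : fderiv ℝ (fderiv ℝ φ) (s, w) (1, 0) ((0 : ℝ), v)
        = fderiv ℝ (fderiv ℝ φ) (s, w) ((0 : ℝ), v) (1, 0) :=
      (hφ.contDiffAt.isSymmSndFDerivAt (by simp [minSmoothness_of_isRCLikeNormedField])) _ _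
    have h4 : HasFDerivAt (fun w' => fderiv ℝ φ (s, w'))
        ((fderiv ℝ (fderiv ℝ φ) (s, w)).comp ι) w :=
      (hΨd (s, w)).hasFDerivAt.comp w (hjd s w)
    have h5 : HasFDerivAt (fun w' => fderiv ℝ φ (s, w') ((1 : ℝ), (0 : WSp n)))
        ((ContinuousLinearMap.apply ℝ (WSp n) ((1 : ℝ), (0 : WSp n))).comp
          ((fderiv ℝ (fderiv ℝ φ) (s, w)).comp ι)) w :=
      (ContinuousLinearMap.apply ℝ (WSp n) ((1 : ℝ), (0 : WSp n))).hasFDerivAt.comp w h4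
    have h6 : fderiv ℝ (fun w' => contactField H (φ (s, w'))) w v
        = fderiv ℝ (fderiv ℝ φ) (s, w) ((0 : ℝ), v) (1, 0) := by
      have hfun : (fun w' => contactField H (φ (s, w')))
          = fun w' => fderiv ℝ φ (s, w') ((1 : ℝ), (0 : WSp n)) :=
        funext fun w' => (hΨ10 s w').symm
      rw [hfun, h5.fderiv]
      rfl
    rw [h6, ← hsymm]
    exact h2
  -- Claim B: the contact form along the flow satisfies a linear ODE
  have hfc : ∀ s : ℝ, HasDerivAt
      (fun r => (fderiv ℝ φ (r, w) ((0 : ℝ), v)).2.2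
        - ⟪(φ (r, w)).2.1, (fderiv ℝ φ (r, w) ((0 : ℝ), v)).1⟫)
      (-(deriv (fun ζ => H ((φ (s, w)).1, (φ (s, w)).2.1, ζ)) (φ (s, w)).2.2)
        * ((fderiv ℝ φ (s, w) ((0 : ℝ), v)).2.2
            - ⟪(φ (s, w)).2.1, (fderiv ℝ φ (s, w) ((0 : ℝ), v)).1⟫)) s := by
    intro s
    set Gp : WSp n → EuSp n := fun y => gradient (fun q => H (y.1, q, y.2.2)) y.2.1 with hGpdef
    set Gx : WSp n → EuSp n := fun y => gradient (fun q => H (q, y.2.1, y.2.2)) y.1 with hGxdef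
    set pz : WSp n → ℝ := fun y => deriv (fun ζ => H (y.1, y.2.1, ζ)) y.2.2 with hpzdef
    have hGp : ContDiff ℝ 1 Gp := contDiff_gradP hH
    have hGx : ContDiff ℝ 1 Gx := contDiff_gradX hH
    have hpz : ContDiff ℝ 1 pz := contDiff_pz hH
    set Φ : WSp n → WSp n := fun w' => φ (s, w') with hΦdef
    have hΦs : Differentiable ℝ Φ := fun w' =>
      ((hφd (s, w')).hasFDerivAt.comp w' (hjd s w')).differentiableAt
    have hΦw : HasFDerivAt Φ (fderiv ℝ Φ w) w := (hΦs w).hasFDerivAt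
    set y : WSp n := φ (s, w) with hy
    set π : WSp n →L[ℝ] EuSp n :=
      (ContinuousLinearMap.fst ℝ (EuSp n) ℝ).comp
        (ContinuousLinearMap.snd ℝ (EuSp n) (EuSp n × ℝ)) with hπ
    have hGpΦ : HasFDerivAt (fun w' => Gp (Φ w')) (fderiv ℝ (fun w' => Gp (Φ w')) w) w :=
      (((hGp.differentiable one_ne_zero).comp hΦs) w).hasFDerivAt
    have hpΦ : HasFDerivAt (fun w' => (Φ w').2.1) (π.comp (fderiv ℝ Φ w)) w :=
      π.hasFDerivAt.comp w hΦw
    have hSd : HasFDerivAt (fun w' => -Gx (Φ w') - pz (Φ w') • (Φ w').2.1)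
        (fderiv ℝ (fun w' => -Gx (Φ w') - pz (Φ w') • (Φ w').2.1) w) w := by
      apply DifferentiableAt.hasFDerivAt
      exact ((((hGx.differentiable one_ne_zero).comp hΦs) w).neg).sub
        ((((hpz.differentiable one_ne_zero).comp hΦs) w).smul hpΦ.differentiableAt)
    have hHΦ : HasFDerivAt (fun w' => H (Φ w')) ((fderiv ℝ H y).comp (fderiv ℝ Φ w)) w :=
      (hHd y).hasFDerivAt.comp w hΦw
    have hT : HasFDerivAt (fun w' => ⟪(Φ w').2.1, Gp (Φ w')⟫ - H (Φ w'))
        (((fderivInnerCLM ℝ ((Φ w).2.1, Gp (Φ w))).comp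
            ((π.comp (fderiv ℝ Φ w)).prod (fderiv ℝ (fun w' => Gp (Φ w')) w)))
          - (fderiv ℝ H y).comp (fderiv ℝ Φ w)) w :=
      (hpΦ.inner ℝ hGpΦ).sub hHΦ
    have hXΦ : HasFDerivAt (fun w' => contactField H (Φ w'))
        ((fderiv ℝ (fun w' => Gp (Φ w')) w).prod
          ((fderiv ℝ (fun w' => -Gx (Φ w') - pz (Φ w') • (Φ w').2.1) w).prod
            (((fderivInnerCLM ℝ ((Φ w).2.1, Gp (Φ w))).comp
                ((π.comp (fderiv ℝ Φ w)).prod (fderiv ℝ (fun w' => Gp (Φ w')) w)))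
              - (fderiv ℝ H y).comp (fderiv ℝ Φ w)))) w :=
      hGpΦ.prodMk (hSd.prodMk hT)
    have hfΦ : fderiv ℝ Φ w = (fderiv ℝ φ (s, w)).comp ι :=
      ((hφd (s, w)).hasFDerivAt.comp w (hjd s w)).fderiv
    have hαv : fderiv ℝ Φ w v = fderiv ℝ φ (s, w) ((0 : ℝ), v) := by rw [hfΦ]; rfl
    have hA := hXΦ.fderiv
    have hA1 : (fderiv ℝ (fun w' => contactField H (Φ w')) w v).1
        = fderiv ℝ (fun w' => Gp (Φ w')) w v := by rw [hA]; rfl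
    have hA3 : (fderiv ℝ (fun w' => contactField H (Φ w')) w v).2.2
        = (⟪(Φ w).2.1, fderiv ℝ (fun w' => Gp (Φ w')) w v⟫
            + ⟪(fderiv ℝ Φ w v).2.1, Gp (Φ w)⟫)
          - fderiv ℝ H y (fderiv ℝ Φ w v) := by
      rw [hA]
      simp only [ContinuousLinearMap.prod_apply, ContinuousLinearMap.sub_apply,
        ContinuousLinearMap.comp_apply, fderivInnerCLM_apply]
      rfl
    have hαd : HasDerivAt (fun r => fderiv ℝ φ (r, w) ((0 : ℝ), v))
        (fderiv ℝ (fun w' => contactField H (Φ w')) w v) s := hαderiv s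
    have hz : HasDerivAt (fun r => (fderiv ℝ φ (r, w) ((0 : ℝ), v)).2.2)
        ((fderiv ℝ (fun w' => contactField H (Φ w')) w v).2.2) s :=
      ((ContinuousLinearMap.snd ℝ (EuSp n) ℝ).comp
        (ContinuousLinearMap.snd ℝ (EuSp n) (EuSp n × ℝ))).hasFDerivAt.comp_hasDerivAt s hαd
    have hx1 : HasDerivAt (fun r => (fderiv ℝ φ (r, w) ((0 : ℝ), v)).1)
        ((fderiv ℝ (fun w' => contactField H (Φ w')) w v).1) s :=
      (ContinuousLinearMap.fst ℝ (EuSp n) (EuSp n × ℝ)).hasFDerivAt.comp_hasDerivAt s hαd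
    have hpc : HasDerivAt (fun r => (φ (r, w)).2.1) ((contactField H y).2.1) s :=
      π.hasFDerivAt.comp_hasDerivAt s (hφflow s w)
    have hin := hpc.inner ℝ hx1
    have hfd := hz.sub hin
    refine hfd.congr_deriv ?_
    rw [hA3, hA1, hαv]
    have hXy : (contactField H y).2.1
        = -(gradient (fun q => H (q, y.2.1, y.2.2)) y.1)
          - (deriv (fun ζ => H (y.1, y.2.1, ζ)) y.2.2) • y.2.1 := rfl
    rw [hXy, fderiv_H_apply hHd y]
    simp only [hGpdef, hGxdef, hpzdef, hΦdef, hy]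
    rw [inner_sub_left, inner_neg_left, real_inner_smul_left,
      real_inner_comm (fderiv ℝ φ (s, w) ((0 : ℝ), v)).2.1]
    ring
  -- the coefficient is continuous
  have hacont : Continuous
      (fun s : ℝ => deriv (fun ζ => H ((φ (s, w)).1, (φ (s, w)).2.1, ζ)) (φ (s, w)).2.2) := by
    have h1 : Continuous (fun s : ℝ => φ (s, w)) :=
      hφ.continuous.comp (continuous_id.prodMk continuous_const)
    exact ((contDiff_pz hH).continuous).comp h1
  -- solve the ODE
  set f : ℝ → ℝ := fun r => (fderiv ℝ φ (r, w) ((0 : ℝ), v)).2.2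
      - ⟪(φ (r, w)).2.1, (fderiv ℝ φ (r, w) ((0 : ℝ), v)).1⟫ with hfdef
  set a : ℝ → ℝ := fun s =>
      deriv (fun ζ => H ((φ (s, w)).1, (φ (s, w)).2.1, ζ)) (φ (s, w)).2.2 with hadef
  have hsol : f t = Real.exp (-(∫ s in (0 : ℝ)..t, a s)) * f 0 := by
    set I : ℝ → ℝ := fun r => ∫ u in (0 : ℝ)..r, a u with hI
    have hId : ∀ r, HasDerivAt I (a r) r := fun r =>
      (hacont.integral_hasStrictDerivAt 0 r).hasDerivAt
    set g : ℝ → ℝ := fun r => f r * Real.exp (I r) with hg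
    have hgd : ∀ r, HasDerivAt g 0 r := by
      intro r
      have h1 := (hfc r).mul ((hId r).exp)
      refine h1.congr_deriv ?_
      ring
    have hgc : g t = g 0 :=
      is_const_of_deriv_eq_zero (fun r => (hgd r).differentiableAt)
        (fun r => (hgd r).deriv) t 0
    have h0 : g 0 = f 0 := by simp [hg, hI]
    rw [h0] at hgc
    rw [Real.exp_neg]
    have hgc' : f t * Real.exp (I t) = f 0 := hgc
    rw [eq_inv_mul_iff_mul_eq₀ (Real.exp_pos _).ne', mul_comm]; exact hgc'
  -- identify `f 0`
  have hf0 : f 0 = v.2.2 - ⟪w.2.1, v.1⟫ := by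
    have h7 : fderiv ℝ (fun w' => φ (0, w')) w = (fderiv ℝ φ (0, w)).comp ι :=
      ((hφd (0, w)).hasFDerivAt.comp w (hjd 0 w)).fderiv
    have h8 : (fun w' : WSp n => φ (0, w')) = (id : WSp n → WSp n) := funext hφ0
    have h9 : fderiv ℝ φ (0, w) ((0 : ℝ), v) = v := by
      have : fderiv ℝ (fun w' => φ (0, w')) w v = fderiv ℝ φ (0, w) ((0 : ℝ), v) := by
        rw [h7]; rfl
      rw [← this, h8, fderiv_id]
      rfl
    rw [hfdef]
    simp only [h9, hφ0 w]
  -- identify the left-hand side with `f t`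
  have hlhs : fderiv ℝ (fun w' => (φ (t, w')).2.2) w v
      - ⟪(φ (t, w)).2.1, fderiv ℝ (fun w' => (φ (t, w')).1) w v⟫ = f t := by
    have hΦt : HasFDerivAt (fun w' => φ (t, w')) ((fderiv ℝ φ (t, w)).comp ι) w :=
      (hφd (t, w)).hasFDerivAt.comp w (hjd t w)
    have e1 : fderiv ℝ (fun w' => (φ (t, w')).2.2) w v
        = (fderiv ℝ φ (t, w) ((0 : ℝ), v)).2.2 := by
      have h : HasFDerivAt (fun w' => (φ (t, w')).2.2)
          (((ContinuousLinearMap.snd ℝ (EuSp n) ℝ).comp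
            (ContinuousLinearMap.snd ℝ (EuSp n) (EuSp n × ℝ))).comp
              ((fderiv ℝ φ (t, w)).comp ι)) w :=
        ((ContinuousLinearMap.snd ℝ (EuSp n) ℝ).comp
          (ContinuousLinearMap.snd ℝ (EuSp n) (EuSp n × ℝ))).hasFDerivAt.comp w hΦt
      rw [h.fderiv]; rfl
    have e2 : fderiv ℝ (fun w' => (φ (t, w')).1) w v
        = (fderiv ℝ φ (t, w) ((0 : ℝ), v)).1 := by
      have h : HasFDerivAt (fun w' => (φ (t, w')).1)
          ((ContinuousLinearMap.fst ℝ (EuSp n) (EuSp n × ℝ)).comp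
            ((fderiv ℝ φ (t, w)).comp ι)) w :=
        (ContinuousLinearMap.fst ℝ (EuSp n) (EuSp n × ℝ)).hasFDerivAt.comp w hΦt
      rw [h.fderiv]; rfl
    rw [e1, e2, hfdef]
  rw [hlhs, hsol, hf0]
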